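/- arXiv:1703.09135 — 3 statements merged into one kernel-verified Lean document; each statement's English description precedes it below -/
import Mathlib

section
/- Let B be the 2×2 complex matrix with rows (μ₁, b) and (0, μ₂), where μ₁, μ₂, b are nonzero complex numbers. Then there do not exist a nonzero complex number μ and an invertible 2×2 complex matrix P such that (1/μ)·P·B·P̄ᵀ is Hermitian. -/
open Matrix

/-- An upper-triangular invertible `2×2` complex matrix with nonzero off-diagonal entry
cannot be made Hermitian by congruence and scaling. -/
theorem flattening_stmt1 (μ₁ μ₂ b : ℂ) (hμ₁ : μ₁ ≠ 0) (hμ₂ : μ₂ ≠ 0) (hb : b ≠ 0) :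
    ¬ ∃ (μ : ℂ) (P : Matrix (Fin 2) (Fin 2) ℂ), μ ≠ 0 ∧ IsUnit P.det ∧
      (μ⁻¹ • (P * !![μ₁, b; 0, μ₂] * Pᴴ)).IsHermitian := by
  rintro ⟨μ, P, hμ, hP, hH⟩
  set B : Matrix (Fin 2) (Fin 2) ℂ := !![μ₁, b; 0, μ₂] with hB
  have hPH : IsUnit Pᴴ.det := by
    rw [Matrix.det_conjTranspose]
    exact hP.star
  have hE : (star μ)⁻¹ • (P * Bᴴ * Pᴴ) = μ⁻¹ • (P * B * Pᴴ) := by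
    have := hH
    unfold Matrix.IsHermitian at this
    rw [conjTranspose_smul] at this
    simpa [conjTranspose_mul, mul_assoc, RCLike.star_def, map_inv₀] using this
  have hE2 : (star μ)⁻¹ • Bᴴ = μ⁻¹ • B := by
    have := congrArg (fun X => P⁻¹ * X * Pᴴ⁻¹) hE
    simp only [Matrix.mul_smul, Matrix.smul_mul] at this
    have h1 : P⁻¹ * (P * Bᴴ * Pᴴ) * Pᴴ⁻¹ = Bᴴ := by
      rw [← mul_assoc, ← mul_assoc, Matrix.nonsing_inv_mul P hP, one_mul,
        mul_assoc, Matrix.mul_nonsing_inv Pᴴ hPH, mul_one]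
    have h2 : P⁻¹ * (P * B * Pᴴ) * Pᴴ⁻¹ = B := by
      rw [← mul_assoc, ← mul_assoc, Matrix.nonsing_inv_mul P hP, one_mul,
        mul_assoc, Matrix.mul_nonsing_inv Pᴴ hPH, mul_one]
    rw [h1, h2] at this
    exact this
  have := congrFun (congrFun (congrArg (fun M => M) hE2) 0) 1
  simp [hB, Matrix.smul_apply, Matrix.conjTranspose_apply] at this
  rcases this with h | h
  · exact hμ h
  · exact hb h
end

section
/- Let B be the 2×2 complex matrix with rows (1, b) and (0, μ₂), where b ∈ ℂ and μ₂ is a nonzero complex number with μ₂ ∉ ℝ. Then there do not exist a nonzero complex number μ and an invertible 2×2 complex matrix P such that (1/μ)·P·B·P̄ᵀ is Hermitian. -/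
open Matrix

/-- An upper-triangular `2×2` complex matrix `!![1, b; 0, μ₂]` with `μ₂` nonzero and non-real
cannot be made Hermitian by congruence and scaling. -/
theorem flattening_stmt2 (b μ₂ : ℂ) (hμ₂ : μ₂ ≠ 0) (hμ₂R : μ₂.im ≠ 0) :
    ¬ ∃ (μ : ℂ) (P : Matrix (Fin 2) (Fin 2) ℂ), μ ≠ 0 ∧ IsUnit P.det ∧
      (μ⁻¹ • (P * !![1, b; 0, μ₂] * Pᴴ)).IsHermitian := by
  rintro ⟨μ, P, hμ, hP, hH⟩
  set B : Matrix (Fin 2) (Fin 2) ℂ := !![1, b; 0, μ₂] with hB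
  haveI : Invertible P := P.invertibleOfIsUnitDet hP
  have hPu : IsUnit P := isUnit_of_invertible P
  have hPHu : IsUnit Pᴴ := isUnit_of_invertible Pᴴ
  have h1 : P * ((star μ)⁻¹ • Bᴴ) * Pᴴ = P * (μ⁻¹ • B) * Pᴴ := by
    have := hH
    unfold Matrix.IsHermitian at this
    simpa [Matrix.conjTranspose_smul, Matrix.conjTranspose_mul, mul_assoc,
      Matrix.mul_smul, Matrix.smul_mul, star_inv₀] using this
  have h2 : (star μ)⁻¹ • Bᴴ = μ⁻¹ • B :=
    hPHu.mul_right_cancel (hPu.mul_left_cancel (by simpa [mul_assoc] using h1))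
  have e00 := congrFun (congrFun h2 0) 0
  have e11 := congrFun (congrFun h2 1) 1
  simp [hB, Matrix.conjTranspose_apply] at e00 e11
  rw [e00] at e11
  have : star μ₂ = μ₂ := by
    have hμi : μ⁻¹ ≠ 0 := inv_ne_zero hμ
    exact mul_left_cancel₀ hμi e11
  exact hμ₂R (Complex.conj_eq_iff_im.mp this)
end

section
/- Suppose for each quadruple of nonnegative integers (t, s, r, h) with t+s+r+h = m+1, complex numbers Ψ_[tsrh] are given (with Ψ_[tsrh] := 0 if any index is negative), satisfying the relation (s+1)Ψ_[t−1,s+1,r,h] + (s+1)Ψ_[t,s+1,r−1,h] − (t+1)Ψ_[t+1,s−1,r,h] − (t+1)Ψ_[t+1,s,r,h−1] = 0 for all t,s,r ≥ 0 and h = m+1−t−s−r ≥ 0. Fix h₀ ≥ −1 and suppose Ψ_[tsrh] = 0 for all h ≤ h₀. Define Ψ^{(k)}_[s,h] = Σ_t (−1)^{m+1−t−s−h} C(t, k) Ψ_[t,s,m+1−t−s−h,h] (sum over all integers t, with binomial coefficient C(t,k) = 0 for t < k). Then for all s ≥ 0 and k ≥ 1: (s+1)·Ψ^{(k−1)}_[s+1,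 h₀+1] = (k+1)·Ψ^{(k+1)}_[s−1, h₀+1]. -/
lemma neg_one_zpow_sub_nat (a : ℤ) (t : ℕ) :
    (-1 : ℂ) ^ (a - (t : ℤ)) = (-1 : ℂ) ^ a * (-1 : ℂ) ^ t := by
  rw [zpow_sub₀ (by norm_num : (-1 : ℂ) ≠ 0), zpow_natCast, div_eq_mul_inv, ← inv_pow]
  norm_num


lemma aux_sum (m j : ℕ) (S : ℂ) (A B : ℤ → ℂ)
    (key : ∀ u : ℕ, (S + 1) * (A ((u:ℤ) - 1) + A (u:ℤ)) = ((u:ℂ) + 1) * B ((u:ℤ) + 1))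
    (hAtop : A ((m:ℤ) + 1) = 0) (hBtop : B ((m:ℤ) + 2) = 0) :
    (S + 1) * ∑ t ∈ Finset.range (m + 2), (-1:ℂ)^t * (t.choose j : ℂ) * A (t:ℤ)
      = ((j:ℂ) + 2) * ∑ t ∈ Finset.range (m + 2), (-1:ℂ)^t * (t.choose (j+2) : ℂ) * B (t:ℤ) := by
  have P1 : ∑ u ∈ Finset.range (m + 2), (-1:ℂ)^u * (u.choose (j+1) : ℂ) * A ((u:ℤ) - 1)
      = -∑ t ∈ Finset.range (m + 2), (-1:ℂ)^t * ((t+1).choose (j+1) : ℂ) * A (t:ℤ) := by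
    rw [Finset.sum_range_succ' (fun u => (-1:ℂ)^u * (u.choose (j+1) : ℂ) * A ((u:ℤ) - 1)) (m+1),
        Finset.sum_range_succ (fun t => (-1:ℂ)^t * ((t+1).choose (j+1) : ℂ) * A (t:ℤ)) (m+1)]
    have e0 : ((0:ℕ).choose (j+1) : ℂ) = 0 := by simp
    have etop : A (((m+1 : ℕ)):ℤ) = 0 := by push_cast; exact hAtop
    rw [e0, etop, neg_add, ← Finset.sum_neg_distrib]
    simp only [mul_zero, zero_mul, add_zero, neg_zero]
    refine Finset.sum_congr rfl fun u _ => ?_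
    have e1 : ((u+1 : ℕ) : ℤ) - 1 = (u : ℤ) := by push_cast; ring
    rw [e1, pow_succ]
    ring
  have Q : ∑ u ∈ Finset.range (m + 2), (-1:ℂ)^u * ((u+1).choose (j+2) : ℂ) * B ((u:ℤ) + 1)
      = -∑ t ∈ Finset.range (m + 2), (-1:ℂ)^t * (t.choose (j+2) : ℂ) * B (t:ℤ) := by
    have h1 := Finset.sum_range_succ' (fun t => (-1:ℂ)^t * (t.choose (j+2) : ℂ) * B (t:ℤ)) (m+2)
    have h2 := Finset.sum_range_succ (fun t => (-1:ℂ)^t * (t.choose (j+2) : ℂ) * B (t:ℤ)) (m+2)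
    have e0 : ((0:ℕ).choose (j+2) : ℂ) = 0 := by simp
    have etop : B (((m+2 : ℕ)):ℤ) = 0 := by push_cast; exact hBtop
    rw [h2, e0, etop] at h1
    simp only [mul_zero, zero_mul, add_zero, pow_zero] at h1
    -- h1 : ∑ t ∈ range(m+2), g t = ∑ u ∈ range(m+2), g (u+1)
    rw [← neg_eq_iff_eq_neg, ← Finset.sum_neg_distrib, h1]
    refine Finset.sum_congr rfl fun u _ => ?_
    have e1 : ((u+1 : ℕ) : ℤ) = (u : ℤ) + 1 := by push_cast; ring
    rw [e1, pow_succ]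
    ring
  have P2 : ∑ u ∈ Finset.range (m + 2), (-1:ℂ)^u * (u.choose (j+1) : ℂ) * (((u:ℂ)+1) * B ((u:ℤ) + 1))
      = -(((j:ℂ)+2) * ∑ t ∈ Finset.range (m + 2), (-1:ℂ)^t * (t.choose (j+2) : ℂ) * B (t:ℤ)) := by
    have step : ∀ u ∈ Finset.range (m+2), (-1:ℂ)^u * (u.choose (j+1) : ℂ) * (((u:ℂ)+1) * B ((u:ℤ) + 1))
        = ((j:ℂ)+2) * ((-1:ℂ)^u * ((u+1).choose (j+2) : ℂ) * B ((u:ℤ) + 1)) := by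
      intro u _
      have hc : ((u:ℂ)+1) * (u.choose (j+1):ℂ) = ((u+1).choose (j+2):ℂ) * ((j:ℂ)+2) := by
        exact_mod_cast congrArg (Nat.cast : ℕ → ℂ) (Nat.add_one_mul_choose_eq u (j+1))
      linear_combination (-1:ℂ)^u * B ((u:ℤ)+1) * hc
    rw [Finset.sum_congr rfl step, ← Finset.mul_sum, Q]
    ring
  have E : ∑ u ∈ Finset.range (m + 2), (-1:ℂ)^u * (u.choose (j+1) : ℂ) * ((S + 1) * (A ((u:ℤ)-1) + A (u:ℤ)))
      = ∑ u ∈ Finset.range (m + 2), (-1:ℂ)^u * (u.choose (j+1) : ℂ) * (((u:ℂ)+1) * B ((u:ℤ)+1)) :=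
    Finset.sum_congr rfl fun u _ => by rw [key u]
  have L : ∑ u ∈ Finset.range (m + 2), (-1:ℂ)^u * (u.choose (j+1) : ℂ) * ((S + 1) * (A ((u:ℤ)-1) + A (u:ℤ)))
      = (S+1) * (∑ u ∈ Finset.range (m + 2), (-1:ℂ)^u * (u.choose (j+1) : ℂ) * A ((u:ℤ) - 1))
        + (S+1) * (∑ u ∈ Finset.range (m + 2), (-1:ℂ)^u * (u.choose (j+1) : ℂ) * A (u:ℤ)) := by
    rw [Finset.mul_sum, Finset.mul_sum, ← Finset.sum_add_distrib]
    exact Finset.sum_congr rfl fun u _ => by ring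
  have Pas : ∑ t ∈ Finset.range (m + 2), (-1:ℂ)^t * ((t+1).choose (j+1) : ℂ) * A (t:ℤ)
      = ∑ t ∈ Finset.range (m + 2), (-1:ℂ)^t * (t.choose j : ℂ) * A (t:ℤ)
        + ∑ t ∈ Finset.range (m + 2), (-1:ℂ)^t * (t.choose (j+1) : ℂ) * A (t:ℤ) := by
    rw [← Finset.sum_add_distrib]
    refine Finset.sum_congr rfl fun t _ => ?_
    rw [Nat.choose_succ_succ]
    push_cast
    ring
  have E2 := L.symm.trans (E.trans P2)
  rw [P1, Pas] at E2
  linear_combination -E2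

/-- Equation (B3) of Lemma 7.3: given coefficients `Ψ_[tsrh]` (vanishing for negative indices)
satisfying the recursion coming from the PDE `(z₂+z̄₂)Ψ₁ − (z₁+z̄₁)Ψ₂ = 0`, and vanishing for
`h ≤ h₀`, the binomial-weighted sums
`Ψ^{(k)}_[s,h] = Σ_t (−1)^{m+1−t−s−h} C(t,k) Ψ_[t,s,m+1−t−s−h,h]`
satisfy `(s+1)·Ψ^{(k−1)}_[s+1, h₀+1] = (k+1)·Ψ^{(k+1)}_[s−1, h₀+1]` for all `s ≥ 0`, `k ≥ 1`. -/
theorem flattening_stmt15 (m : ℕ) (Ψ : ℤ → ℤ → ℤ → ℤ → ℂ)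
    (hneg : ∀ t s r h : ℤ, (t < 0 ∨ s < 0 ∨ r < 0 ∨ h < 0) → Ψ t s r h = 0)
    (hrel : ∀ t s r h : ℤ, 0 ≤ t → 0 ≤ s → 0 ≤ r → 0 ≤ h →
      t + s + r + h = (m : ℤ) + 1 →
      ((s : ℂ) + 1) * Ψ (t - 1) (s + 1) r h + ((s : ℂ) + 1) * Ψ t (s + 1) (r - 1) h
        - ((t : ℂ) + 1) * Ψ (t + 1) (s - 1) r h - ((t : ℂ) + 1) * Ψ (t + 1) s r (h - 1) = 0)
    (h₀ : ℤ) (hh₀ : -1 ≤ h₀)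
    (hvan : ∀ t s r h : ℤ, h ≤ h₀ → Ψ t s r h = 0)
    (Ψk : ℕ → ℤ → ℤ → ℂ)
    (hΨk : ∀ (k : ℕ) (s h : ℤ), Ψk k s h =
      ∑ t ∈ Finset.range (m + 2),
        (-1 : ℂ) ^ ((m : ℤ) + 1 - (t : ℤ) - s - h) * (Nat.choose t k : ℂ) *
          Ψ (t : ℤ) s ((m : ℤ) + 1 - (t : ℤ) - s - h) h) :
    ∀ (s : ℤ) (k : ℕ), 0 ≤ s → 1 ≤ k →
      ((s : ℂ) + 1) * Ψk (k - 1) (s + 1) (h₀ + 1)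
        = ((k : ℂ) + 1) * Ψk (k + 1) (s - 1) (h₀ + 1) := by
  intro s k hs hk
  obtain ⟨j, rfl⟩ : ∃ j, k = j + 1 := ⟨k - 1, by omega⟩
  set a : ℤ := (m : ℤ) - s - h₀ - 1 with ha
  have key : ∀ u : ℕ, ((s:ℂ) + 1) *
        (Ψ ((u:ℤ) - 1) (s+1) (a - ((u:ℤ) - 1)) (h₀+1) + Ψ (u:ℤ) (s+1) (a - (u:ℤ)) (h₀+1))
      = ((u:ℂ) + 1) * Ψ ((u:ℤ) + 1) (s-1) (a + 2 - ((u:ℤ) + 1)) (h₀+1) := by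
    intro u
    have e1 : a - ((u:ℤ) - 1) = a + 1 - u := by ring
    have e2 : a - (u:ℤ) = a + 1 - (u:ℤ) - 1 := by ring
    have e3 : a + 2 - ((u:ℤ) + 1) = a + 1 - u := by ring
    rw [e1, e2, e3]
    by_cases hr : 0 ≤ a + 1 - (u:ℤ)
    · have h4 : Ψ ((u:ℤ)+1) s (a + 1 - u) (h₀ + 1 - 1) = 0 := hvan _ _ _ _ (by omega)
      have hr' := hrel u s (a + 1 - u) (h₀+1) (Int.natCast_nonneg u) hs hr (by omega)
        (by rw [ha]; ring)
      push_cast at hr' ⊢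
      linear_combination hr' + ((u:ℂ)+1) * h4
    · have z1 : Ψ ((u:ℤ)-1) (s+1) (a + 1 - (u:ℤ)) (h₀+1) = 0 := hneg _ _ _ _ (by omega)
      have z2 : Ψ (u:ℤ) (s+1) (a + 1 - (u:ℤ) - 1) (h₀+1) = 0 := hneg _ _ _ _ (by omega)
      have z3 : Ψ ((u:ℤ)+1) (s-1) (a + 1 - (u:ℤ)) (h₀+1) = 0 := hneg _ _ _ _ (by omega)
      rw [z1, z2, z3]
      ring
  have hAtop : Ψ ((m:ℤ) + 1) (s+1) (a - ((m:ℤ) + 1)) (h₀+1) = 0 := hneg _ _ _ _ (by omega)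
  have hBtop : Ψ ((m:ℤ) + 2) (s-1) (a + 2 - ((m:ℤ) + 2)) (h₀+1) = 0 := hneg _ _ _ _ (by omega)
  have main := aux_sum m j ((s:ℂ)) (fun t => Ψ t (s+1) (a - t) (h₀+1))
    (fun t => Ψ t (s-1) (a + 2 - t) (h₀+1)) key hAtop hBtop
  rw [hΨk, hΨk]
  simp only [Nat.add_sub_cancel]
  have T1 : ∑ t ∈ Finset.range (m + 2),
        (-1:ℂ) ^ ((m:ℤ) + 1 - (t:ℤ) - (s+1) - (h₀+1)) * (t.choose j : ℂ) *
          Ψ (t:ℤ) (s+1) ((m:ℤ) + 1 - (t:ℤ) - (s+1) - (h₀+1)) (h₀+1)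
      = (-1:ℂ) ^ a * ∑ t ∈ Finset.range (m + 2),
          (-1:ℂ)^t * (t.choose j : ℂ) * Ψ (t:ℤ) (s+1) (a - (t:ℤ)) (h₀+1) := by
    rw [Finset.mul_sum]
    refine Finset.sum_congr rfl fun t _ => ?_
    rw [show (m:ℤ) + 1 - (t:ℤ) - (s+1) - (h₀+1) = a - (t:ℤ) from by rw [ha]; ring,
        neg_one_zpow_sub_nat]
    ring
  have T2 : ∑ t ∈ Finset.range (m + 2),
        (-1:ℂ) ^ ((m:ℤ) + 1 - (t:ℤ) - (s-1) - (h₀+1)) * (t.choose (j+1+1) : ℂ) *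
          Ψ (t:ℤ) (s-1) ((m:ℤ) + 1 - (t:ℤ) - (s-1) - (h₀+1)) (h₀+1)
      = (-1:ℂ) ^ a * ∑ t ∈ Finset.range (m + 2),
          (-1:ℂ)^t * (t.choose (j+2) : ℂ) * Ψ (t:ℤ) (s-1) (a + 2 - (t:ℤ)) (h₀+1) := by
    rw [Finset.mul_sum]
    refine Finset.sum_congr rfl fun t _ => ?_
    rw [show (m:ℤ) + 1 - (t:ℤ) - (s-1) - (h₀+1) = (a + 2) - (t:ℤ) from by rw [ha]; ring,
        neg_one_zpow_sub_nat, show (-1:ℂ)^(a+2) = (-1:ℂ)^a from by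
          rw [zpow_add₀ (by norm_num : (-1:ℂ) ≠ 0)]; norm_num]
    ring
  rw [T1, T2]
  push_cast
  linear_combination (-1:ℂ)^a * main
end
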